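/- Let H be a complex Hilbert space, let S be a bounded operator on H, and let D be a bounded self-adjoint operator on H with D ≥ 1 (that is, ⟨Dx, x⟩ ≥ ‖x‖² for all x ∈ H), so that D is invertible. Assume D S D^{-1} is bounded (automatic here). Then for each b with 0 ≤ b ≤ 1, the operator D^b S D^{-b} satisfies ‖D^b S D^{-b}‖ ≤ max(‖S‖, ‖D S D^{-1}‖), where D^b and D^{-b} are defined by the continuous functional calculus of D applied to λ ↦ λ^b and λ ↦ λ^{-b}. -/

import Mathlib

set_option maxHeartbeats 1000000

open MeasureTheory

/-- Complex interpolation (Lemma 7.6): if `S` is a bounded operator on a complex Hilbert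
space and `D` is a bounded self-adjoint operator with `D ≥ 1`, then for `0 ≤ b ≤ 1`,
`‖D^b S D^{-b}‖ ≤ max (‖S‖, ‖D S D^{-1}‖)`, where `D^b`, `D^{-b}` and `D^{-1}` are
defined by the continuous functional calculus of `D`. -/
theorem complex_interpolation
    {H : Type*} [NormedAddCommGroup H] [InnerProductSpace ℂ H] [CompleteSpace H]
    (S D : H →L[ℂ] H) (hD : IsSelfAdjoint D)
    (hD1 : ∀ x : H, ‖x‖ ^ 2 ≤ (inner ℂ (D x) x : ℂ).re)
    (b : ℝ) (hb0 : 0 ≤ b) (hb1 : b ≤ 1) :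
    ‖cfc (fun lam : ℝ => lam ^ b) D ∘L S ∘L cfc (fun lam : ℝ => lam ^ (-b)) D‖ ≤
      max ‖S‖ ‖D ∘L S ∘L cfc (fun lam : ℝ => lam ^ (-1 : ℝ)) D‖ := by
  open NormedSpace ContinuousLinearMap in
  obtain hH | hH := subsingleton_or_nontrivial H
  · have : Subsingleton (H →L[ℂ] H) := ⟨fun a b => ContinuousLinearMap.ext fun x => Subsingleton.elim _ _⟩
    rw [Subsingleton.elim (cfc (fun lam : ℝ => lam ^ b) D ∘L S ∘L
      cfc (fun lam : ℝ => lam ^ (-b)) D) 0, norm_zero]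
    positivity
  -- the spectrum of `D` lies in `[1, ‖D‖]`
  have hpos : (0 : H →L[ℂ] H) ≤ D - 1 := by
    rw [nonneg_iff_isPositive]
    refine ⟨(hD.sub (IsSelfAdjoint.one _)).isSymmetric, fun x => ?_⟩
    have h1 := hD1 x
    have h2 : (inner ℂ (x : H) x : ℂ).re = ‖x‖ ^ 2 := by
      rw [@inner_self_eq_norm_sq_to_K ℂ]; norm_cast
    simp only [reApplyInnerSelf_apply, sub_apply, one_apply, inner_sub_left, map_sub]
    show (0:ℝ) ≤ (inner ℂ (D x) x : ℂ).re - (inner ℂ (x : H) x : ℂ).re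
    rw [h2]; linarith
  have hspecR : ∀ r ∈ spectrum ℝ D, (1:ℝ) ≤ r := by
    intro r hr
    have h0 := (StarOrderedRing.nonneg_iff_spectrum_nonneg (R := ℝ) _).mp hpos
    have hmem : r - 1 ∈ spectrum ℝ (D - algebraMap ℝ _ 1) := by
      rw [← spectrum.sub_singleton_eq]
      exact Set.sub_mem_sub hr rfl
    have := h0 _ (by simpa using hmem)
    linarith
  have hspec : ∀ w ∈ spectrum ℂ D, (w.re : ℂ) = w ∧ 1 ≤ w.re ∧ w.re ≤ ‖D‖ := fun w hw =>
    ⟨hD.spectrumRestricts.rightInvOn hw, hspecR _ (hD.spectrumRestricts.apply_mem hw),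
      le_trans (Complex.re_le_norm w) (spectrum.norm_le_norm_of_mem hw)⟩
  set g : ℂ → ℂ := fun w => (Real.log w.re : ℂ) with hgdef
  have hg : ContinuousOn g (spectrum ℂ D) := by
    intro w hw
    have h1 : (1:ℝ) ≤ w.re := (hspec w hw).2.1
    have : ContinuousAt g w :=
      Complex.continuous_ofReal.continuousAt.comp ((Real.continuousAt_log (by linarith)).comp
        Complex.continuous_re.continuousAt)
    exact this.continuousWithinAt
  set Ac : H →L[ℂ] H := cfc g D with hAcdef
  have hE : ∀ z : ℂ, exp (z • Ac) = cfc (fun w => Complex.exp (z * g w)) D := by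
    intro z
    have h1 : z • Ac = cfc (fun w => z * g w) D := by
      rw [hAcdef, ← cfc_smul z g D hg]; simp [smul_eq_mul]
    rw [h1, ← CFC.complex_exp_eq_normedSpace_exp (cfc_predicate _ D),
      ← cfc_comp Complex.exp (fun w => z * g w) D hD.isStarNormal
        Complex.continuous_exp.continuousOn (hg.const_smul z)]
    rfl
  -- norm bounds for `exp (z • Ac)`
  have hnorm : ∀ z : ℂ, ∀ c : ℝ, 0 ≤ c → (∀ r : ℝ, 1 ≤ r → r ≤ ‖D‖ → r ^ z.re ≤ c) →
      ‖exp (z • Ac)‖ ≤ c := by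
    intro z c hc h
    rw [hE z]
    refine norm_cfc_le hc fun w hw => ?_
    obtain ⟨hw1, hw2, hw3⟩ := hspec w hw
    have hn : ‖Complex.exp (z * g w)‖ = w.re ^ z.re := by
      rw [Complex.norm_exp]
      have hre : (z * g w).re = z.re * Real.log w.re := by
        simp [hgdef, Complex.mul_re]
      rw [hre, Real.rpow_def_of_pos (by linarith), mul_comm]
    rw [hn]; exact h _ hw2 hw3
  have hle1 : ∀ z : ℂ, z.re ≤ 0 → ‖exp (z • Ac)‖ ≤ 1 := fun z hz =>
    hnorm z 1 zero_le_one fun r h1 _ => by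
      calc r ^ z.re ≤ r ^ (0:ℝ) := Real.rpow_le_rpow_of_exponent_le h1 hz
      _ = 1 := Real.rpow_zero r
  have hleD : ∀ z : ℂ, 0 ≤ z.re → z.re ≤ 1 → ‖exp (z • Ac)‖ ≤ max 1 ‖D‖ := fun z h0 h1 =>
    hnorm z _ (le_trans zero_le_one (le_max_left _ _)) fun r hr1 hr2 => by
      calc r ^ z.re ≤ r ^ (1:ℝ) := Real.rpow_le_rpow_of_exponent_le hr1 h1
      _ = r := Real.rpow_one r
      _ ≤ ‖D‖ := hr2
      _ ≤ max 1 ‖D‖ := le_max_right _ _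
  -- identification with real rpow cfc
  have hrp : ∀ t : ℝ, exp ((t:ℂ) • Ac) = cfc (fun lam : ℝ => lam ^ t) D := by
    intro t
    rw [cfc_real_eq_complex _ hD, hE]
    apply cfc_congr
    intro w hw
    obtain ⟨hw1, hw2, _⟩ := hspec w hw
    show Complex.exp ((t:ℂ) * g w) = ((w.re ^ t : ℝ) : ℂ)
    rw [show (t:ℂ) * g w = ((t * Real.log w.re : ℝ) : ℂ) by simp [hgdef],
      ← Complex.ofReal_exp, Real.rpow_def_of_pos (by linarith : (0:ℝ) < w.re), mul_comm]
  have hexp1 : exp ((1:ℂ) • Ac) = D := by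
    rw [show ((1:ℂ)) = ((1:ℝ):ℂ) by norm_num, hrp 1]
    rw [cfc_congr (fun r _ => Real.rpow_one r), cfc_id' ℝ D]
  -- the interpolation function
  set F : ℂ → (H →L[ℂ] H) := fun z => exp (z • Ac) * S * exp (z • (-Ac)) with hFdef
  have hzneg : ∀ z : ℂ, z • (-Ac) = (-z) • Ac := fun z => by rw [smul_neg, neg_smul]
  have e1 : Differentiable ℂ (fun z : ℂ => exp (z • Ac)) :=
    fun z => (hasDerivAt_exp_smul_const Ac z).differentiableAt
  have e2 : Differentiable ℂ (fun z : ℂ => exp (z • (-Ac))) :=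
    fun z => (hasDerivAt_exp_smul_const (-Ac) z).differentiableAt
  have hdiff : Differentiable ℂ F := (e1.mul (differentiable_const S)).mul e2
  set M : ℝ := max ‖S‖ ‖D ∘L S ∘L cfc (fun lam : ℝ => lam ^ (-1 : ℝ)) D‖ with hMdef
  have hM0 : 0 ≤ M := le_trans (norm_nonneg S) (le_max_left _ _)
  have hbdd : BddAbove ((norm ∘ F) '' (Complex.HadamardThreeLines.verticalClosedStrip 0 1)) := by
    refine ⟨(max 1 ‖D‖) * ‖S‖, ?_⟩
    rintro y ⟨z, hz, rfl⟩
    obtain ⟨hz0, hz1⟩ : 0 ≤ z.re ∧ z.re ≤ 1 := hz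
    have h1 : ‖exp (z • (-Ac))‖ ≤ 1 := by
      rw [hzneg]; exact hle1 _ (by simp [hz0])
    calc ‖F z‖ ≤ ‖exp (z • Ac) * S‖ * ‖exp (z • (-Ac))‖ := norm_mul_le _ _
    _ ≤ (‖exp (z • Ac)‖ * ‖S‖) * 1 :=
        mul_le_mul (norm_mul_le _ _) h1 (norm_nonneg _) (by positivity)
    _ = ‖exp (z • Ac)‖ * ‖S‖ := mul_one _
    _ ≤ (max 1 ‖D‖) * ‖S‖ := by
        exact mul_le_mul_of_nonneg_right (hleD z hz0 hz1) (norm_nonneg S)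
  have hedge0 : ∀ z ∈ Complex.re ⁻¹' {0}, ‖F z‖ ≤ M := by
    intro z hz
    have hz0 : z.re = 0 := hz
    have h1 : ‖exp (z • Ac)‖ ≤ 1 := hle1 z (le_of_eq hz0)
    have h2 : ‖exp (z • (-Ac))‖ ≤ 1 := by rw [hzneg]; exact hle1 _ (by simp [hz0])
    calc ‖F z‖ ≤ ‖exp (z • Ac) * S‖ * ‖exp (z • (-Ac))‖ := norm_mul_le _ _
    _ ≤ (‖exp (z • Ac)‖ * ‖S‖) * 1 :=
        mul_le_mul (norm_mul_le _ _) h2 (norm_nonneg _) (by positivity)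
    _ ≤ (1 * ‖S‖) * 1 := by
        exact mul_le_mul_of_nonneg_right (mul_le_mul_of_nonneg_right h1 (norm_nonneg S)) zero_le_one
    _ = ‖S‖ := by ring
    _ ≤ M := le_max_left _ _
  have hedge1 : ∀ z ∈ Complex.re ⁻¹' {1}, ‖F z‖ ≤ M := by
    intro z hz
    have hz1 : z.re = 1 := hz
    have hcomm : ∀ (u v : ℂ) (B : H →L[ℂ] H), Commute (u • B) (v • B) :=
      fun u v B => ((Commute.refl B).smul_left u).smul_right v
    letI : NormedAlgebra ℚ (H →L[ℂ] H) := .restrictScalars ℚ ℂ _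
    have hsplit : exp (z • Ac) = exp ((z - 1) • Ac) * exp ((1:ℂ) • Ac) := by
      rw [← exp_add_of_commute (hcomm _ _ _), ← add_smul, sub_add_cancel]
    have hsplit' : exp (z • (-Ac)) = exp ((1:ℂ) • (-Ac)) * exp ((z - 1) • (-Ac)) := by
      rw [← exp_add_of_commute (hcomm _ _ _), ← add_smul]
      norm_num
    have hmid : exp ((1:ℂ) • Ac) * S * exp ((1:ℂ) • (-Ac)) =
        D ∘L S ∘L cfc (fun lam : ℝ => lam ^ (-1 : ℝ)) D := by
      rw [hexp1, show ((1:ℂ)) • (-Ac) = ((-1:ℝ):ℂ) • Ac by rw [hzneg]; norm_num,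
        hrp (-1)]
      rw [mul_assoc]
      rfl
    have hFz : F z = exp ((z - 1) • Ac) *
        (D ∘L S ∘L cfc (fun lam : ℝ => lam ^ (-1 : ℝ)) D) * exp ((z - 1) • (-Ac)) := by
      rw [hFdef]
      show exp (z • Ac) * S * exp (z • (-Ac)) = _
      rw [hsplit, hsplit', ← hmid]
      simp only [mul_assoc]
    have hre0 : (z - 1).re = 0 := by simp [Complex.sub_re, hz1]
    have h1 : ‖exp ((z - 1) • Ac)‖ ≤ 1 := hle1 _ (le_of_eq hre0)
    have h2 : ‖exp ((z - 1) • (-Ac))‖ ≤ 1 := by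
      rw [hzneg]; exact hle1 _ (by rw [Complex.neg_re, hre0]; norm_num)
    calc ‖F z‖ ≤ ‖exp ((z - 1) • Ac) *
        (D ∘L S ∘L cfc (fun lam : ℝ => lam ^ (-1 : ℝ)) D)‖ * ‖exp ((z - 1) • (-Ac))‖ := by
          rw [hFz]; exact norm_mul_le _ _
    _ ≤ (‖exp ((z - 1) • Ac)‖ * ‖D ∘L S ∘L cfc (fun lam : ℝ => lam ^ (-1 : ℝ)) D‖) * 1 :=
        mul_le_mul (norm_mul_le _ _) h2 (norm_nonneg _) (by positivity)
    _ ≤ (1 * ‖D ∘L S ∘L cfc (fun lam : ℝ => lam ^ (-1 : ℝ)) D‖) * 1 :=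
        mul_le_mul_of_nonneg_right (mul_le_mul_of_nonneg_right h1 (norm_nonneg _)) zero_le_one
    _ = ‖D ∘L S ∘L cfc (fun lam : ℝ => lam ^ (-1 : ℝ)) D‖ := by ring
    _ ≤ M := le_max_right _ _
  have hbmem : (b:ℂ) ∈ Complex.HadamardThreeLines.verticalClosedStrip 0 1 := by
    show (b:ℂ).re ∈ Set.Icc (0:ℝ) 1
    rw [Complex.ofReal_re]; exact ⟨hb0, hb1⟩
  have key := Complex.HadamardThreeLines.norm_le_interp_of_mem_verticalClosedStrip₀₁' F hbmem
    hdiff.diffContOnCl hbdd hedge0 hedge1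
  rw [Complex.ofReal_re] at key
  have hFb : F (b:ℂ) = cfc (fun lam : ℝ => lam ^ b) D ∘L S ∘L
      cfc (fun lam : ℝ => lam ^ (-b)) D := by
    rw [hFdef]
    show exp ((b:ℂ) • Ac) * S * exp ((b:ℂ) • (-Ac)) = _
    rw [show ((b:ℂ)) • (-Ac) = ((-b:ℝ):ℂ) • Ac by rw [hzneg]; norm_cast,
      hrp b, hrp (-b)]
    rw [mul_assoc]
    rfl
  rw [hFb] at key
  refine le_trans key ?_
  by_cases hMz : M = 0
  · rw [hMz]
    by_cases hbz : b = 0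
    · simp [hbz]
    · rw [Real.zero_rpow hbz, mul_zero]
  · have hMpos : 0 < M := lt_of_le_of_ne hM0 (Ne.symm hMz)
    rw [← Real.rpow_add hMpos]
    norm_num
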